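/- If G is a bipartite simple graph with minimum degree δ(G) ≥ 1, then μ_int(G) ≤ ⌈Δ(G)/δ(G)⌉, where Δ(G) and δ(G) denote the maximum and minimum degree of G. -/

import Mathlib

open SimpleGraph

/-- The set ("spectrum") of colors appearing on edges incident to vertex `v`
under the edge coloring `c`. -/
def SimpleGraph.colorSpectrum {V : Type*} (G : SimpleGraph V) (c : Sym2 V → ℕ) (v : V) :
    Set ℕ :=
  {n | ∃ w, G.Adj v w ∧ c s(v, w) = n}

/-- A set of natural numbers is an interval of consecutive integers. -/
def IsIntervalSet (S : Set ℕ) : Prop :=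
  ∀ a ∈ S, ∀ b ∈ S, ∀ x, a ≤ x → x ≤ b → x ∈ S

/-- `c` is a `k`-improper interval edge coloring of `G`: at most `k` edges with a common
endpoint share a color, and the colors at each vertex form an interval. -/
def SimpleGraph.IsImproperIntervalColoring {V : Type*} (G : SimpleGraph V)
    (c : Sym2 V → ℕ) (k : ℕ) : Prop :=
  (∀ v n, {w | G.Adj v w ∧ c s(v, w) = n}.ncard ≤ k) ∧
    ∀ v, IsIntervalSet (G.colorSpectrum c v)

/-- The interval coloring impropriety of `G`: the least `k` such that `G` has a
`k`-improper interval edge coloring. -/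
noncomputable def SimpleGraph.muInt {V : Type*} (G : SimpleGraph V) : ℕ :=
  sInf {k | ∃ c : Sym2 V → ℕ, G.IsImproperIntervalColoring c k}

section Aux

open Finset

/-- Birkhoff-type decomposition: a doubly `D`-regular matrix of naturals is a sum of
`D` "permutation" (bijection) matrices. -/
lemma aux_birkhoff : ∀ (D : ℕ) {α β : Type*} [Fintype α] [Fintype β] [DecidableEq α]
    [DecidableEq β] (m : α → β → ℕ), (∀ a, ∑ b, m a b = D) → (∀ b, ∑ a, m a b = D) →
    ∃ P : Fin D → α → β, (∀ c, Function.Bijective (P c)) ∧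
      ∀ a b, m a b = (Finset.univ.filter fun c => P c a = b).card := by
  intro D
  induction D with
  | zero =>
    intro α β _ _ _ _ m hr hc
    refine ⟨fun c => c.elim0, fun c => c.elim0, fun a b => ?_⟩
    have h0 : m a b = 0 := by
      have := hr a
      have hle : m a b ≤ ∑ b', m a b' := Finset.single_le_sum (fun _ _ => Nat.zero_le _) (mem_univ b)
      omega
    simp [h0, Finset.filter_eq_empty_iff]
  | succ D ih =>
    intro α β _ _ _ _ m hr hc
    set r : α → Finset β := fun a => univ.filter (fun b => 0 < m a b) with hrdef
    have hall : ∀ s : Finset α, s.card ≤ (s.biUnion r).card := by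
      intro s
      have key : (D+1) * s.card ≤ (D+1) * (s.biUnion r).card := by
        calc (D+1) * s.card = ∑ a ∈ s, (D+1) := by rw [Finset.sum_const, smul_eq_mul, mul_comm]
        _ = ∑ a ∈ s, ∑ b, m a b := by simp [hr]
        _ = ∑ a ∈ s, ∑ b ∈ r a, m a b := by
            refine Finset.sum_congr rfl fun a _ => ?_
            refine (Finset.sum_subset (Finset.filter_subset _ _) ?_).symm
            intro b _ hb
            simp [hrdef] at hb
            omega
        _ ≤ ∑ a ∈ s, ∑ b ∈ s.biUnion r, m a b := by
            refine Finset.sum_le_sum fun a ha => ?_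
            refine Finset.sum_le_sum_of_subset fun b hb => ?_
            exact Finset.mem_biUnion.2 ⟨a, ha, hb⟩
        _ = ∑ b ∈ s.biUnion r, ∑ a ∈ s, m a b := Finset.sum_comm
        _ ≤ ∑ b ∈ s.biUnion r, (D+1) := by
            refine Finset.sum_le_sum fun b _ => ?_
            rw [← hc b]
            exact Finset.sum_le_sum_of_subset (Finset.subset_univ s)
        _ = (D+1) * (s.biUnion r).card := by rw [Finset.sum_const, smul_eq_mul, mul_comm]
      exact Nat.le_of_mul_le_mul_left key (Nat.succ_pos D)
    obtain ⟨f, hfinj, hfr⟩ := (Finset.all_card_le_biUnion_card_iff_exists_injective r).1 hall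
    have hcard : Fintype.card α = Fintype.card β := by
      have h1 : (D+1) * Fintype.card α = (D+1) * Fintype.card β := by
        calc (D+1) * Fintype.card α = ∑ a : α, (D+1) := by
              rw [Finset.sum_const, smul_eq_mul, mul_comm]; rfl
        _ = ∑ a : α, ∑ b, m a b := by simp [hr]
        _ = ∑ b : β, ∑ a, m a b := Finset.sum_comm
        _ = ∑ b : β, (D+1) := by simp [hc]
        _ = (D+1) * Fintype.card β := by rw [Finset.sum_const, smul_eq_mul, mul_comm]; rfl
      exact Nat.eq_of_mul_eq_mul_left (Nat.succ_pos D) h1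
    have hfbij : Function.Bijective f := (Fintype.bijective_iff_injective_and_card f).2 ⟨hfinj, hcard⟩
    have hfpos : ∀ a, 0 < m a (f a) := by
      intro a; have := hfr a
      rw [hrdef] at this
      exact (Finset.mem_filter.1 this).2
    set m' : α → β → ℕ := fun a b => m a b - (if f a = b then 1 else 0) with hm'
    have hif_le : ∀ a b, (if f a = b then 1 else 0) ≤ m a b := by
      intro a b
      by_cases h : f a = b
      · subst h
        rw [if_pos rfl]; exact hfpos a
      · simp [h]
    have hr' : ∀ a, ∑ b, m' a b = D := by
      intro a
      have : ∑ b, m' a b = (∑ b, m a b) - ∑ b, (if f a = b then 1 else 0) := by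
        rw [← Finset.sum_tsub_distrib]
        intro b _; exact hif_le a b
      rw [this, hr a]
      simp
    have hc' : ∀ b, ∑ a, m' a b = D := by
      intro b
      have : ∑ a, m' a b = (∑ a, m a b) - ∑ a, (if f a = b then 1 else 0) := by
        rw [← Finset.sum_tsub_distrib]
        intro a _; exact hif_le a b
      rw [this, hc b]
      have : ∑ a, (if f a = b then 1 else 0) = 1 := by
        obtain ⟨a0, ha0⟩ := hfbij.2 b
        rw [Finset.sum_eq_single a0]
        · simp [ha0]
        · intro a _ hne
          have : f a ≠ b := fun h => hne (hfbij.1 (h.trans ha0.symm))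
          simp [this]
        · simp
      omega
    obtain ⟨P', hP'bij, hP'count⟩ := ih m' hr' hc'
    refine ⟨Fin.cases f P', ?_, ?_⟩
    · intro c
      refine Fin.cases ?_ ?_ c
      · exact hfbij
      · intro i; exact hP'bij i
    · intro a b
      have hsplit : (univ.filter fun c : Fin (D+1) => Fin.cases f P' c a = b).card
          = (if f a = b then 1 else 0) + (univ.filter fun c : Fin D => P' c a = b).card := by
        rw [Finset.card_filter, Finset.card_filter, Fin.sum_univ_succ]
        simp [Fin.cases_succ]
        rw [Finset.card_filter]
        congr
      rw [hsplit, ← hP'count a b]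
      have := hif_le a b
      simp only [hm']
      omega

lemma aux_finIndicatorSum {k : ℕ} (c : ℕ) (hc : c < k) :
    (∑ j : Fin k, if c = (j : ℕ) then 1 else 0) = 1 := by
  rw [Finset.sum_eq_single_of_mem (⟨c, hc⟩ : Fin k) (mem_univ _)]
  · simp
  · intro j _ hj
    have : c ≠ (j : ℕ) := fun h => hj (by ext; simp [← h])
    simp [this]

lemma aux_fin2_eq_zero (a b : Fin 2) (h : a ≠ b) (hb : b ≠ 0) : a = 0 := by
  revert h hb; revert a b; decide

lemma aux_divcount_le (d t i : ℕ) (ht : 0 < t) :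
    ((Finset.range d).filter fun x => x / t = i).card ≤ t := by
  have : ((Finset.range d).filter fun x => x / t = i).card ≤ (Finset.range t).card := by
    apply Finset.card_le_card_of_injOn (fun x => x % t)
    · intro x _; simp [Nat.mod_lt _ ht]
    · intro x hx y hy hxy
      simp only [Finset.coe_filter, Set.mem_setOf_eq, Finset.mem_range] at hx hy
      obtain ⟨hx1, hx2⟩ := hx
      obtain ⟨hy1, hy2⟩ := hy
      have h3 : x / t = y / t := by rw [hx2, hy2]
      have h4 : x % t = y % t := hxy
      have h5 : t * (x / t) = t * (y / t) := by rw [h3]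
      have h1 := Nat.div_add_mod x t
      have h2 := Nat.div_add_mod y t
      omega
  simpa using this

lemma aux_divcount_zero (d t : ℕ) (ht : 0 < t) (h : t ≤ d) :
    ((Finset.range d).filter fun x => x / t = 0).card = t := by
  have : ((Finset.range d).filter fun x => x / t = 0) = Finset.range t := by
    ext x
    simp only [Finset.mem_filter, Finset.mem_range]
    rw [Nat.div_eq_zero_iff]
    omega
  rw [this, Finset.card_range]

lemma aux_uniq_of_filter_card_one {γ : Type*} [Fintype γ] {p : γ → Prop} [DecidablePred p]
    (h : (univ.filter p).card = 1) {a b : γ} (ha : p a) (hb : p b) : a = b :=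
  Finset.card_le_one.mp h.le a (mem_filter.2 ⟨mem_univ _, ha⟩) b (mem_filter.2 ⟨mem_univ _, hb⟩)

variable {V : Type*} [Fintype V] [DecidableEq V] (G : SimpleGraph V) [DecidableRel G.Adj]

/-- An enumeration index for neighbors of each vertex. -/
noncomputable def auxIdx (v w : V) : ℕ :=
  if h : w ∈ G.neighborFinset v then ((G.neighborFinset v).equivFin ⟨w, h⟩ : ℕ) else 0

lemma auxIdx_lt {v w : V} (h : G.Adj v w) : auxIdx G v w < G.degree v := by
  have hm : w ∈ G.neighborFinset v := by rwa [SimpleGraph.mem_neighborFinset]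
  rw [auxIdx, dif_pos hm]
  have h1 := ((G.neighborFinset v).equivFin ⟨w, hm⟩).isLt
  have h2 := G.card_neighborFinset_eq_degree v
  omega

lemma auxIdx_inj {v w1 w2 : V} (h1 : G.Adj v w1) (h2 : G.Adj v w2)
    (he : auxIdx G v w1 = auxIdx G v w2) : w1 = w2 := by
  have hm1 : w1 ∈ G.neighborFinset v := by rwa [SimpleGraph.mem_neighborFinset]
  have hm2 : w2 ∈ G.neighborFinset v := by rwa [SimpleGraph.mem_neighborFinset]
  rw [auxIdx, dif_pos hm1, auxIdx, dif_pos hm2] at he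
  have := (G.neighborFinset v).equivFin.injective (Fin.ext he)
  exact Subtype.ext_iff.1 this

lemma auxIdx_surj {v : V} {x : ℕ} (hx : x < G.degree v) :
    ∃ w, G.Adj v w ∧ auxIdx G v w = x := by
  have hx' : x < (G.neighborFinset v).card := by rwa [G.card_neighborFinset_eq_degree]
  set s := (G.neighborFinset v).equivFin.symm ⟨x, hx'⟩ with hs
  refine ⟨s.1, by rw [← SimpleGraph.mem_neighborFinset]; exact s.2, ?_⟩
  rw [auxIdx, dif_pos s.2]
  have : (G.neighborFinset v).equivFin ⟨s.1, s.2⟩ = ⟨x, hx'⟩ := by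
    show (G.neighborFinset v).equivFin s = ⟨x, hx'⟩
    rw [hs]
    exact (G.neighborFinset v).equivFin.apply_symm_apply _
  rw [this]

variable (C : V → Fin 2) (t k : ℕ)

/-- Number of neighbors of `v` whose index falls in block `i`. -/
noncomputable def auxNcnt (v : V) (i : ℕ) : ℕ :=
  (univ.filter fun w => G.Adj v w ∧ auxIdx G v w / t = i).card

lemma auxNcnt_eq (v : V) (i : ℕ) :
    auxNcnt G t v i = ((Finset.range (G.degree v)).filter fun x => x / t = i).card := by
  rw [auxNcnt]
  apply Finset.card_bij (fun w _ => auxIdx G v w)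
  · intro w hw
    simp only [mem_filter, mem_univ, true_and] at hw
    simp only [mem_filter, Finset.mem_range]
    exact ⟨auxIdx_lt G hw.1, hw.2⟩
  · intro w1 hw1 w2 hw2 he
    simp only [mem_filter, mem_univ, true_and] at hw1 hw2
    exact auxIdx_inj G hw1.1 hw2.1 he
  · intro x hx
    simp only [mem_filter, Finset.mem_range] at hx
    obtain ⟨w, hw, hwx⟩ := auxIdx_surj G hx.1
    refine ⟨w, ?_, hwx⟩
    simp only [mem_filter, mem_univ, true_and]
    exact ⟨hw, by rw [hwx]; exact hx.2⟩

lemma auxNcnt_le (v : V) (i : ℕ) (ht : 0 < t) : auxNcnt G t v i ≤ t := by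
  rw [auxNcnt_eq]; exact aux_divcount_le _ _ _ ht

lemma auxNcnt_zero (v : V) (ht : 0 < t) (hd : t ≤ G.degree v) : auxNcnt G t v 0 = t := by
  rw [auxNcnt_eq]; exact aux_divcount_zero _ _ ht hd

/-- The split incidence matrix. -/
noncomputable def auxM0 (x y : V × Fin k) : ℕ :=
  if (G.Adj x.1 y.1 ∧ C x.1 = 0 ∧ auxIdx G x.1 y.1 / t = (x.2 : ℕ) ∧
      auxIdx G y.1 x.1 / t = (y.2 : ℕ)) then 1 else 0

lemma aux_row0 (ht : 0 < t) (hdeg : ∀ v, G.degree v ≤ t * k) (x : V × Fin k) :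
    ∑ y, auxM0 G C t k x y = if C x.1 = 0 then auxNcnt G t x.1 (x.2 : ℕ) else 0 := by
  rw [Fintype.sum_prod_type]
  by_cases h0 : C x.1 = 0
  · rw [if_pos h0, auxNcnt, Finset.card_filter]
    refine Finset.sum_congr rfl fun v _ => ?_
    by_cases hA : G.Adj x.1 v ∧ auxIdx G x.1 v / t = (x.2 : ℕ)
    · rw [if_pos hA]
      have hlt : auxIdx G v x.1 / t < k := by
        have h1 := auxIdx_lt G hA.1.symm
        have h2 := hdeg v
        rw [Nat.div_lt_iff_lt_mul ht]
        calc auxIdx G v x.1 < G.degree v := h1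
        _ ≤ t * k := h2
        _ = k * t := mul_comm t k
      calc ∑ j : Fin k, auxM0 G C t k x (v, j)
          = ∑ j : Fin k, if auxIdx G v x.1 / t = (j : ℕ) then 1 else 0 := by
            refine Finset.sum_congr rfl fun j _ => ?_
            rw [auxM0]
            by_cases hj : auxIdx G v x.1 / t = (j : ℕ)
            · rw [if_pos hj, if_pos ⟨hA.1, h0, hA.2, hj⟩]
            · rw [if_neg hj, if_neg (fun hh => hj hh.2.2.2)]
        _ = 1 := aux_finIndicatorSum _ hlt
    · rw [if_neg hA]
      refine Finset.sum_eq_zero fun j _ => ?_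
      rw [auxM0, if_neg]
      rintro ⟨a, b, c, d⟩
      exact hA ⟨a, c⟩
  · rw [if_neg h0]
    refine Finset.sum_eq_zero fun v _ => Finset.sum_eq_zero fun j _ => ?_
    rw [auxM0, if_neg]
    rintro ⟨a, b, c, d⟩
    exact h0 b

lemma aux_col0 (hC : ∀ ⦃u v⦄, G.Adj u v → C u ≠ C v) (ht : 0 < t)
    (hdeg : ∀ v, G.degree v ≤ t * k) (y : V × Fin k) :
    ∑ x, auxM0 G C t k x y = if C y.1 = 0 then 0 else auxNcnt G t y.1 (y.2 : ℕ) := by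
  rw [Fintype.sum_prod_type]
  by_cases h0 : C y.1 = 0
  · rw [if_pos h0]
    refine Finset.sum_eq_zero fun u _ => Finset.sum_eq_zero fun i _ => ?_
    rw [auxM0, if_neg]
    rintro ⟨a, b, c, d⟩
    exact hC a (b.trans h0.symm)
  · rw [if_neg h0, auxNcnt, Finset.card_filter]
    refine Finset.sum_congr rfl fun u _ => ?_
    by_cases hA : G.Adj y.1 u ∧ auxIdx G y.1 u / t = (y.2 : ℕ)
    · rw [if_pos hA]
      have hu0 : C u = 0 := aux_fin2_eq_zero (C u) (C y.1) (hC hA.1.symm) h0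
      have hlt : auxIdx G u y.1 / t < k := by
        have h1 := auxIdx_lt G hA.1.symm
        have h2 := hdeg u
        rw [Nat.div_lt_iff_lt_mul ht]
        calc auxIdx G u y.1 < G.degree u := h1
        _ ≤ t * k := h2
        _ = k * t := mul_comm t k
      calc ∑ i : Fin k, auxM0 G C t k (u, i) y
          = ∑ i : Fin k, if auxIdx G u y.1 / t = (i : ℕ) then 1 else 0 := by
            refine Finset.sum_congr rfl fun i _ => ?_
            rw [auxM0]
            by_cases hi : auxIdx G u y.1 / t = (i : ℕ)
            · rw [if_pos hi, if_pos ⟨hA.1.symm, hu0, hi, hA.2⟩]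
            · rw [if_neg hi, if_neg (fun hh => hi hh.2.2.1)]
        _ = 1 := aux_finIndicatorSum _ hlt
    · rw [if_neg hA]
      refine Finset.sum_eq_zero fun i _ => ?_
      rw [auxM0, if_neg]
      rintro ⟨a, b, c, d⟩
      exact hA ⟨a.symm, d⟩

/-- The padded, doubly `t`-regular matrix. -/
noncomputable def auxMM (x y : (V × Fin k) ⊕ (V × Fin k)) : ℕ :=
  match x, y with
  | .inl x, .inl y => auxM0 G C t k x y
  | .inl x, .inr x' => if x = x' then t - ∑ y, auxM0 G C t k x y else 0
  | .inr y', .inl y => if y = y' then t - ∑ x, auxM0 G C t k x y else 0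
  | .inr y', .inr x' => auxM0 G C t k x' y'

lemma aux_rowMM (hC : ∀ ⦃u v⦄, G.Adj u v → C u ≠ C v) (ht : 0 < t)
    (hdeg : ∀ v, G.degree v ≤ t * k) (x : (V × Fin k) ⊕ (V × Fin k)) :
    ∑ y, auxMM G C t k x y = t := by
  cases x with
  | inl x =>
    rw [Fintype.sum_sum_type]
    have e1 : ∑ y : V × Fin k, auxMM G C t k (Sum.inl x) (Sum.inl y)
        = ∑ y, auxM0 G C t k x y := rfl
    have e2 : ∑ x' : V × Fin k, auxMM G C t k (Sum.inl x) (Sum.inr x')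
        = t - ∑ y, auxM0 G C t k x y := by
      show (∑ x' : V × Fin k, if x = x' then t - ∑ y, auxM0 G C t k x y else 0) = _
      rw [Finset.sum_ite_eq univ x (fun _ => t - ∑ y, auxM0 G C t k x y), if_pos (mem_univ x)]
    rw [e1, e2]
    have hle : ∑ y, auxM0 G C t k x y ≤ t := by
      rw [aux_row0 G C t k ht hdeg]
      split_ifs
      · exact auxNcnt_le G t _ _ ht
      · exact Nat.zero_le t
    omega
  | inr y' =>
    rw [Fintype.sum_sum_type]
    have e1 : ∑ y : V × Fin k, auxMM G C t k (Sum.inr y') (Sum.inl y)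
        = t - ∑ x, auxM0 G C t k x y' := by
      show (∑ y : V × Fin k, if y = y' then t - ∑ x, auxM0 G C t k x y else 0) = _
      rw [Finset.sum_ite_eq' univ y' (fun y => t - ∑ x, auxM0 G C t k x y), if_pos (mem_univ y')]
    have e2 : ∑ x' : V × Fin k, auxMM G C t k (Sum.inr y') (Sum.inr x')
        = ∑ x', auxM0 G C t k x' y' := rfl
    rw [e1, e2]
    have hle : ∑ x, auxM0 G C t k x y' ≤ t := by
      rw [aux_col0 G C t k hC ht hdeg]
      split_ifs
      · exact Nat.zero_le t
      · exact auxNcnt_le G t _ _ ht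
    omega

lemma aux_colMM (hC : ∀ ⦃u v⦄, G.Adj u v → C u ≠ C v) (ht : 0 < t)
    (hdeg : ∀ v, G.degree v ≤ t * k) (y : (V × Fin k) ⊕ (V × Fin k)) :
    ∑ x, auxMM G C t k x y = t := by
  cases y with
  | inl y =>
    rw [Fintype.sum_sum_type]
    have e1 : ∑ x : V × Fin k, auxMM G C t k (Sum.inl x) (Sum.inl y)
        = ∑ x, auxM0 G C t k x y := rfl
    have e2 : ∑ y' : V × Fin k, auxMM G C t k (Sum.inr y') (Sum.inl y)
        = t - ∑ x, auxM0 G C t k x y := by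
      show (∑ y' : V × Fin k, if y = y' then t - ∑ x, auxM0 G C t k x y else 0) = _
      rw [Finset.sum_ite_eq univ y (fun _ => t - ∑ x, auxM0 G C t k x y), if_pos (mem_univ y)]
    rw [e1, e2]
    have hle : ∑ x, auxM0 G C t k x y ≤ t := by
      rw [aux_col0 G C t k hC ht hdeg]
      split_ifs
      · exact Nat.zero_le t
      · exact auxNcnt_le G t _ _ ht
    omega
  | inr x' =>
    rw [Fintype.sum_sum_type]
    have e1 : ∑ x : V × Fin k, auxMM G C t k (Sum.inl x) (Sum.inr x')
        = t - ∑ y, auxM0 G C t k x' y := by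
      show (∑ x : V × Fin k, if x = x' then t - ∑ y, auxM0 G C t k x y else 0) = _
      rw [Finset.sum_ite_eq' univ x' (fun x => t - ∑ y, auxM0 G C t k x y), if_pos (mem_univ x')]
    have e2 : ∑ y' : V × Fin k, auxMM G C t k (Sum.inr y') (Sum.inr x')
        = ∑ y', auxM0 G C t k x' y' := rfl
    rw [e1, e2]
    have hle : ∑ y, auxM0 G C t k x' y ≤ t := by
      rw [aux_row0 G C t k ht hdeg]
      split_ifs
      · exact auxNcnt_le G t _ _ ht
      · exact Nat.zero_le t
    omega

end Aux

/-- If `G` is bipartite with minimum degree at least 1, then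
`μ_int(G) ≤ ⌈Δ(G)/δ(G)⌉`. -/
theorem statement8 {V : Type*} [Fintype V] (G : SimpleGraph V) [DecidableRel G.Adj]
    (hbip : G.Colorable 2) (hδ : 1 ≤ G.minDegree) :
    G.muInt ≤ (G.maxDegree + G.minDegree - 1) / G.minDegree := by
  classical
  have _instDE : DecidableEq V := Classical.decEq V
  obtain ⟨C0⟩ := hbip
  set C : V → Fin 2 := fun v => C0 v with hCdef
  have hC : ∀ ⦃u v⦄, G.Adj u v → C u ≠ C v := fun u v h => C0.valid h
  set t := G.minDegree with htdef
  set k := (G.maxDegree + t - 1) / t with hkdef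
  have ht : 0 < t := hδ
  have hne : Nonempty V := by
    by_contra h
    rw [not_nonempty_iff] at h
    have : G.minDegree = 0 := by
      rw [SimpleGraph.minDegree, Finset.univ_eq_empty, Finset.image_empty]
      rfl
    omega
  obtain ⟨v0⟩ := hne
  have hΔt : t ≤ G.maxDegree := le_trans (G.minDegree_le_degree v0) (G.degree_le_maxDegree v0)
  have hk1 : 1 ≤ k := by
    rw [hkdef, Nat.le_div_iff_mul_le ht]
    omega
  have htk : G.maxDegree ≤ t * k := by
    have h1 := Nat.div_add_mod (G.maxDegree + t - 1) t
    have h2 := Nat.mod_lt (G.maxDegree + t - 1) ht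
    rw [hkdef]
    omega
  have hdeg : ∀ v, G.degree v ≤ t * k := fun v => le_trans (G.degree_le_maxDegree v) htk
  obtain ⟨P, hPbij, hPcnt⟩ := aux_birkhoff t (auxMM G C t k)
    (aux_rowMM G C t k hC ht hdeg) (aux_colMM G C t k hC ht hdeg)
  -- block-index function
  set cp : V → V → Fin k := fun v w =>
    if h : auxIdx G v w / t < k then ⟨_, h⟩ else ⟨0, hk1⟩ with hcpdef
  have hcpval : ∀ {v w}, G.Adj v w → ((cp v w : Fin k) : ℕ) = auxIdx G v w / t := by
    intro v w h
    have hlt : auxIdx G v w / t < k := by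
      have h1 := auxIdx_lt G h
      have h2 := hdeg v
      rw [Nat.div_lt_iff_lt_mul ht]
      calc auxIdx G v w < G.degree v := h1
      _ ≤ t * k := h2
      _ = k * t := mul_comm t k
    rw [hcpdef]
    simp only [dif_pos hlt]
  set XX : V → V → (V × Fin k) ⊕ (V × Fin k) := fun u v => Sum.inl (u, cp u v) with hXXdef
  have hMM1 : ∀ {u v}, G.Adj u v → C u = 0 → auxMM G C t k (XX u v) (XX v u) = 1 := by
    intro u v h h0
    show auxM0 G C t k (u, cp u v) (v, cp v u) = 1
    rw [auxM0, if_pos ⟨h, h0, (hcpval h).symm, (hcpval h.symm).symm⟩]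
  have hcard1 : ∀ {u v}, G.Adj u v → C u = 0 →
      (Finset.univ.filter fun c : Fin t => P c (XX u v) = XX v u).card = 1 := by
    intro u v h h0
    rw [← hPcnt]
    exact hMM1 h h0
  -- the coloring function
  set fcol : V → V → ℕ := fun u v =>
    if G.Adj u v ∧ C u = 0 then
      (if h : ∃ c : Fin t, P c (XX u v) = XX v u then ((h.choose : Fin t) : ℕ) else 0)
    else if G.Adj u v ∧ C v = 0 then
      (if h : ∃ c : Fin t, P c (XX v u) = XX u v then ((h.choose : Fin t) : ℕ) else 0)
    else 0 with hfcoldef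
  have hfval : ∀ {u v} (h : G.Adj u v) (h0 : C u = 0) {c : Fin t},
      P c (XX u v) = XX v u → fcol u v = (c : ℕ) := by
    intro u v h h0 c hc
    have hex : ∃ c : Fin t, P c (XX u v) = XX v u := ⟨c, hc⟩
    rw [hfcoldef]
    simp only
    rw [if_pos ⟨h, h0⟩, dif_pos hex]
    exact congrArg Fin.val (aux_uniq_of_filter_card_one (hcard1 h h0) hex.choose_spec hc)
  have hfval2 : ∀ {u v} (h : G.Adj u v) (h0 : C u ≠ 0) {c : Fin t},
      P c (XX v u) = XX u v → fcol u v = (c : ℕ) := by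
    intro u v h h0 c hc
    have hv0 : C v = 0 := aux_fin2_eq_zero (C v) (C u) (hC h.symm) h0
    have hex : ∃ c : Fin t, P c (XX v u) = XX u v := ⟨c, hc⟩
    rw [hfcoldef]
    simp only
    rw [if_neg (fun hh => h0 hh.2), if_pos ⟨h, hv0⟩, dif_pos hex]
    exact congrArg Fin.val
      (aux_uniq_of_filter_card_one (hcard1 h.symm hv0) hex.choose_spec hc)
  have hfsym : ∀ u v, fcol u v = fcol v u := by
    intro u v
    by_cases hA : G.Adj u v
    · by_cases h0 : C u = 0
      · have h1 : C v ≠ 0 := fun hh => hC hA (h0.trans hh.symm)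
        rw [hfcoldef]
        simp only
        rw [if_pos ⟨hA, h0⟩, if_neg (fun hh => h1 hh.2), if_pos ⟨hA.symm, h0⟩]
      · have h1 : C v = 0 := aux_fin2_eq_zero (C v) (C u) (hC hA.symm) h0
        rw [hfcoldef]
        simp only
        rw [if_neg (fun hh => h0 hh.2), if_pos ⟨hA, h1⟩, if_pos ⟨hA.symm, h1⟩]
    · rw [hfcoldef]
      simp only
      rw [if_neg (fun hh => hA hh.1), if_neg (fun hh => hA hh.1),
        if_neg (fun hh : G.Adj v u ∧ C v = 0 => hA hh.1.symm),
        if_neg (fun hh : G.Adj v u ∧ C u = 0 => hA hh.1.symm)]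
  have hflt : ∀ u v, fcol u v < t := by
    intro u v
    rw [hfcoldef]
    simp only
    split_ifs
    · exact Fin.is_lt _
    · exact ht
    · exact Fin.is_lt _
    · exact ht
    · exact ht
  set cc : Sym2 V → ℕ := Sym2.lift ⟨fcol, hfsym⟩ with hccdef
  have hccmk : ∀ u v, cc s(u, v) = fcol u v := fun u v => by
    rw [hccdef, Sym2.lift_mk]
  have hlt_all : ∀ v w, G.Adj v w → cc s(v, w) < t := fun v w h => by
    rw [hccmk]; exact hflt v w
  -- every color below t appears at every vertex
  have hcover : ∀ v (n : ℕ), n < t → ∃ w, G.Adj v w ∧ cc s(v, w) = n := by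
    intro v n hn
    set c : Fin t := ⟨n, hn⟩ with hcdef
    have hdv : t ≤ G.degree v := G.minDegree_le_degree v
    by_cases h0 : C v = 0
    · -- row argument
      set x0 : (V × Fin k) ⊕ (V × Fin k) := Sum.inl (v, ⟨0, hk1⟩) with hx0def
      have hentry : 1 ≤ auxMM G C t k x0 (P c x0) := by
        rw [hPcnt]
        refine Finset.card_pos.2 ⟨c, ?_⟩
        simp
      have hR : ∑ y, auxM0 G C t k (v, (⟨0, hk1⟩ : Fin k)) y = t := by
        rw [aux_row0 G C t k ht hdeg]
        simp only [if_pos h0]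
        exact auxNcnt_zero G t v ht hdv
      cases hy : P c x0 with
      | inr x' =>
        exfalso
        rw [hy] at hentry
        have : auxMM G C t k x0 (Sum.inr x') =
            if (v, (⟨0, hk1⟩ : Fin k)) = x' then t - ∑ y, auxM0 G C t k (v, ⟨0, hk1⟩) y else 0 := rfl
        rw [this, hR] at hentry
        split_ifs at hentry <;> omega
      | inl yy =>
        obtain ⟨w, j⟩ := yy
        rw [hy] at hentry
        have hm0 : 1 ≤ auxM0 G C t k (v, ⟨0, hk1⟩) (w, j) := hentry
        rw [auxM0] at hm0
        by_cases hcond : G.Adj v w ∧ C v = 0 ∧ auxIdx G v w / t = ((⟨0, hk1⟩ : Fin k) : ℕ) ∧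
            auxIdx G w v / t = (j : ℕ)
        · refine ⟨w, hcond.1, ?_⟩
          rw [hccmk]
          have hcp1 : cp v w = (⟨0, hk1⟩ : Fin k) := by
            ext
            rw [hcpval hcond.1]
            exact hcond.2.2.1
          have hcp2 : cp w v = j := by
            ext
            rw [hcpval hcond.1.symm]
            exact hcond.2.2.2
          have hXv : XX v w = x0 := by rw [hXXdef]; simp only; rw [hcp1, hx0def]
          have hYv : XX w v = Sum.inl (w, j) := by rw [hXXdef]; simp only; rw [hcp2]
          have : P c (XX v w) = XX w v := by rw [hXv, hYv, hy]
          rw [hfval hcond.1 h0 this]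
        · rw [if_neg hcond] at hm0
          omega
    · -- column argument
      set y0 : (V × Fin k) ⊕ (V × Fin k) := Sum.inl (v, ⟨0, hk1⟩) with hy0def
      obtain ⟨x, hx⟩ := (hPbij c).2 y0
      have hentry : 1 ≤ auxMM G C t k x y0 := by
        rw [hPcnt]
        refine Finset.card_pos.2 ⟨c, ?_⟩
        simp [hx]
      have hCl : ∑ xx, auxM0 G C t k xx (v, (⟨0, hk1⟩ : Fin k)) = t := by
        rw [aux_col0 G C t k hC ht hdeg]
        simp only [if_neg h0]
        exact auxNcnt_zero G t v ht hdv
      cases x with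
      | inr y' =>
        exfalso
        have : auxMM G C t k (Sum.inr y') y0 =
            if (v, (⟨0, hk1⟩ : Fin k)) = y' then t - ∑ xx, auxM0 G C t k xx (v, ⟨0, hk1⟩) else 0 := rfl
        rw [this, hCl] at hentry
        split_ifs at hentry <;> omega
      | inl xx =>
        obtain ⟨u, i⟩ := xx
        have hm0 : 1 ≤ auxM0 G C t k (u, i) (v, ⟨0, hk1⟩) := hentry
        rw [auxM0] at hm0
        by_cases hcond : G.Adj u v ∧ C u = 0 ∧ auxIdx G u v / t = (i : ℕ) ∧
            auxIdx G v u / t = ((⟨0, hk1⟩ : Fin k) : ℕ)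
        · refine ⟨u, hcond.1.symm, ?_⟩
          rw [hccmk]
          have hcp1 : cp u v = i := by
            ext
            rw [hcpval hcond.1]
            exact hcond.2.2.1
          have hcp2 : cp v u = (⟨0, hk1⟩ : Fin k) := by
            ext
            rw [hcpval hcond.1.symm]
            exact hcond.2.2.2
          have hXv : XX u v = Sum.inl (u, i) := by rw [hXXdef]; simp only; rw [hcp1]
          have hYv : XX v u = y0 := by rw [hXXdef]; simp only; rw [hcp2, hy0def]
          have : P c (XX u v) = XX v u := by rw [hXv, hYv, hx]
          exact hfval2 hcond.1.symm h0 this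
        · rw [if_neg hcond] at hm0
          omega
  -- final: exhibit membership in the muInt infimum set
  have hmem : k ∈ {k' | ∃ c : Sym2 V → ℕ, G.IsImproperIntervalColoring c k'} := by
    refine ⟨cc, ?_, ?_⟩
    · -- count condition
      intro v n
      by_cases hn : n < t
      · have hsetfin : {w | G.Adj v w ∧ cc s(v, w) = n} =
            ↑(Finset.univ.filter fun w => G.Adj v w ∧ cc s(v, w) = n) := by
          ext w; simp
        rw [hsetfin, Set.ncard_coe_finset]
        have hcard : (Finset.univ.filter fun w => G.Adj v w ∧ cc s(v, w) = n).card ≤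
            (Finset.univ : Finset (Fin k)).card := by
          apply Finset.card_le_card_of_injOn (fun w => cp v w)
          · intro w _; exact Finset.mem_univ _
          · intro w1 hw1 w2 hw2 hcpe
            simp only [Finset.coe_filter, Set.mem_setOf_eq, Finset.mem_univ, true_and] at hw1 hw2
            obtain ⟨hA1, hc1⟩ := hw1
            obtain ⟨hA2, hc2⟩ := hw2
            set c : Fin t := ⟨n, hn⟩ with hcdef
            by_cases h0 : C v = 0
            · have key : ∀ w, G.Adj v w → cc s(v, w) = n → P c (XX v w) = XX w v := by
                intro w hA hcn
                have h1 := hcard1 hA h0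
                have hne2 : (Finset.univ.filter fun c' : Fin t =>
                    P c' (XX v w) = XX w v).Nonempty := Finset.card_pos.mp (by omega)
                obtain ⟨c', hc'⟩ := hne2
                have hc'' : P c' (XX v w) = XX w v := (Finset.mem_filter.mp hc').2
                have hfv : fcol v w = (c' : ℕ) := hfval hA h0 hc''
                have : c' = c := by
                  ext
                  rw [hcdef]
                  simp only
                  rw [← hfv, ← hccmk v w, hcn]
                rw [← this]
                exact hc''
              have k1 := key w1 hA1 hc1
              have k2 := key w2 hA2 hc2
              have hXe : XX v w1 = XX v w2 := by
                rw [hXXdef]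
                simp only
                rw [show cp v w1 = cp v w2 from hcpe]
              rw [hXe, k2] at k1
              have := Sum.inl.inj k1
              exact ((Prod.mk.injEq _ _ _ _ ▸ this).1).symm
            · have key : ∀ w, G.Adj v w → cc s(v, w) = n → P c (XX w v) = XX v w := by
                intro w hA hcn
                have hw0 : C w = 0 := aux_fin2_eq_zero (C w) (C v) (hC hA.symm) h0
                have h1 := hcard1 hA.symm hw0
                have hne2 : (Finset.univ.filter fun c' : Fin t =>
                    P c' (XX w v) = XX v w).Nonempty := Finset.card_pos.mp (by omega)
                obtain ⟨c', hc'⟩ := hne2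
                have hc'' : P c' (XX w v) = XX v w := (Finset.mem_filter.mp hc').2
                have hfv : fcol v w = (c' : ℕ) := hfval2 hA h0 hc''
                have : c' = c := by
                  ext
                  rw [hcdef]
                  simp only
                  rw [← hfv, ← hccmk v w, hcn]
                rw [← this]
                exact hc''
              have k1 := key w1 hA1 hc1
              have k2 := key w2 hA2 hc2
              have hXe : XX v w1 = XX v w2 := by
                rw [hXXdef]
                simp only
                rw [show cp v w1 = cp v w2 from hcpe]
              rw [← hXe, ← k1] at k2
              have := (hPbij c).1 k2
              have := Sum.inl.inj this
              exact ((Prod.mk.injEq _ _ _ _ ▸ this).1).symm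
        simpa using hcard
      · have hempty : {w | G.Adj v w ∧ cc s(v, w) = n} = ∅ := by
          ext w
          simp only [Set.mem_setOf_eq, Set.mem_empty_iff_false, iff_false, not_and]
          intro hw hcn
          have := hlt_all v w hw
          omega
        rw [hempty, Set.ncard_empty]
        exact Nat.zero_le k
    · -- interval condition
      intro v a ha b hb x hax hxb
      obtain ⟨w, hw, hwc⟩ := hb
      have hbt : b < t := hwc ▸ hlt_all v w hw
      have hxt : x < t := lt_of_le_of_lt hxb hbt
      obtain ⟨w', h1, h2⟩ := hcover v x hxt
      exact ⟨w', h1, h2⟩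
  exact Nat.sInf_le hmem
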